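/- arXiv:2111.04363 — 3 statements merged into one kernel-verified Lean document; each statement's English description precedes it below -/
import Mathlib

section
/- For any connected graphs G and H of orders n ≥ 3 and m ≥ 3 respectively, γ_rdR(G ⊠ H) ≤ γ_rdR(G)·γ_rdR(H) − 6. -/
open SimpleGraph Finset

/-- A restrained double Roman dominating function. -/
def IsRDRD {α : Type*} (G : SimpleGraph α) (f : α → ℕ) : Prop :=
  (∀ v, f v ≤ 3) ∧
  (∀ v, f v = 0 →
    (∃ u, G.Adj v u ∧ f u = 3) ∨
    (∃ u w, u ≠ w ∧ G.Adj v u ∧ G.Adj v w ∧ f u = 2 ∧ f w = 2)) ∧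
  (∀ v, f v = 1 → ∃ u, G.Adj v u ∧ 2 ≤ f u) ∧
  (∀ v, f v = 0 → ∃ u, G.Adj v u ∧ f u = 0)

/-- The restrained double Roman domination number. -/
noncomputable def gammaRdR {α : Type*} (G : SimpleGraph α) [Fintype α] : ℕ :=
  sInf {w | ∃ f, IsRDRD G f ∧ ∑ v, f v = w}

/-- The strong product of two simple graphs. -/
def strongProd {α β : Type*} (G : SimpleGraph α) (H : SimpleGraph β) :
    SimpleGraph (α × β) where
  Adj p q := p ≠ q ∧ (G.Adj p.1 q.1 ∨ p.1 = q.1) ∧ (H.Adj p.2 q.2 ∨ p.2 = q.2)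
  symm := by
    constructor
    rintro p q ⟨h1, h2, h3⟩
    exact ⟨h1.symm, h2.imp (fun h => G.adj_symm h) Eq.symm, h3.imp (fun h => H.adj_symm h) Eq.symm⟩
  loopless := by constructor; rintro p ⟨h1, _⟩; exact h1 rfl

/-- The cardinal (direct/tensor) product of two simple graphs. -/
def cardProd {α β : Type*} (G : SimpleGraph α) (H : SimpleGraph β) :
    SimpleGraph (α × β) where
  Adj p q := G.Adj p.1 q.1 ∧ H.Adj p.2 q.2
  symm := by constructor; rintro p q ⟨h1, h2⟩; exact ⟨h1.symm, h2.symm⟩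
  loopless := by constructor; rintro p ⟨h1, _⟩; exact G.irrefl h1

/-- The corona of two simple graphs. -/
def corona {α β : Type*} (G : SimpleGraph α) (H : SimpleGraph β) :
    SimpleGraph (α ⊕ α × β) where
  Adj x y :=
    match x, y with
    | .inl u, .inl v => G.Adj u v
    | .inl u, .inr (v, _) => u = v
    | .inr (v, _), .inl u => u = v
    | .inr (u, a), .inr (v, b) => u = v ∧ H.Adj a b
  symm := by
    constructor
    rintro (u | ⟨u, a⟩) (v | ⟨v, b⟩) h
    · exact h.symm
    · exact h
    · exact h
    · exact ⟨h.1.symm, h.2.symm⟩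
  loopless := by
    constructor
    rintro (u | ⟨u, a⟩) h
    · exact G.irrefl h
    · exact H.irrefl h.2

-- ###### auxiliary development below

namespace RDRDaux

def phi (x y : ℕ) : ℕ :=
  if x = 0 ∨ y = 0 then 0 else if x = 1 ∨ y = 1 then 1 else max x y

lemma phi_le_three {x y : ℕ} (hx : x ≤ 3) (hy : y ≤ 3) : phi x y ≤ 3 := by
  unfold phi; split_ifs <;> simp_all

lemma phi_le_mul (x y : ℕ) : phi x y ≤ x * y := by
  unfold phi; split_ifs with h1 h2
  · omega
  · have : 1 ≤ x * y := Nat.one_le_iff_ne_zero.mpr (by simp [Nat.mul_eq_zero]; omega)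
    omega
  · have hx : 2 ≤ x := by omega
    have hy : 2 ≤ y := by omega
    have : max x y ≤ x * y := by
      rcases le_total x y with h | h
      · calc max x y = y := max_eq_right h
          _ ≤ x * y := Nat.le_mul_of_pos_left y (by omega)
      · calc max x y = x := max_eq_left h
          _ ≤ x * y := Nat.le_mul_of_pos_right x (by omega)
    omega

lemma phi_eq_zero {x y : ℕ} (h : phi x y = 0) : x = 0 ∨ y = 0 := by
  unfold phi at h; split_ifs at h with h1 h2 <;> simp_all

lemma phi_two_two : phi 2 2 = 2 := by decide
lemma phi_three {y : ℕ} (hy : 2 ≤ y) (hy3 : y ≤ 3) : phi 3 y = 3 := by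
  unfold phi; split_ifs <;> simp_all <;> omega
lemma phi_three' {x : ℕ} (hx : 2 ≤ x) (hx3 : x ≤ 3) : phi x 3 = 3 := by
  unfold phi; split_ifs <;> simp_all <;> omega
lemma phi_ge_two {x y : ℕ} (hx : 2 ≤ x) (hy : 2 ≤ y) : 2 ≤ phi x y := by
  unfold phi; split_ifs <;> simp_all <;> omega
lemma phi_zero_left (y : ℕ) : phi 0 y = 0 := by unfold phi; simp
lemma phi_zero_right (x : ℕ) : phi x 0 = 0 := by unfold phi; simp

lemma exists_closed_two {β : Type*} {H : SimpleGraph β} {g : β → ℕ} (hg : IsRDRD H g) (v : β) :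
    ∃ b, (H.Adj v b ∨ v = b) ∧ 2 ≤ g b := by
  rcases Nat.lt_or_ge (g v) 2 with h | h
  · by_cases h0 : g v = 0
    · rcases hg.2.1 v h0 with ⟨b, hb, hb3⟩ | ⟨b, _, _, hb, _, hb2, _⟩
      · exact ⟨b, Or.inl hb, by omega⟩
      · exact ⟨b, Or.inl hb, by omega⟩
    · have h1 : g v = 1 := by omega
      obtain ⟨b, hb, hb2⟩ := hg.2.2.1 v h1
      exact ⟨b, Or.inl hb, hb2⟩
  · exact ⟨v, Or.inr rfl, h⟩

lemma isRDRD_phi {α β : Type*} {G : SimpleGraph α} {H : SimpleGraph β} {f : α → ℕ} {g : β → ℕ}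
    (hf : IsRDRD G f) (hg : IsRDRD H g) :
    IsRDRD (strongProd G H) (fun p => phi (f p.1) (g p.2)) := by
  obtain ⟨hf3, hf0, hf1, hfr⟩ := hf
  obtain ⟨hg3, hg0, hg1, hgr⟩ := hg
  refine ⟨fun p => phi_le_three (hf3 _) (hg3 _), ?_, ?_, ?_⟩
  · -- double Roman condition for zeros
    rintro ⟨u, v⟩ hp0
    simp only at hp0
    rcases phi_eq_zero hp0 with h | h
    · obtain ⟨b, hb, hb2⟩ := exists_closed_two ⟨hg3, hg0, hg1, hgr⟩ v
      rcases hf0 u h with ⟨a, ha, ha3⟩ | ⟨a1, a2, hne, ha1, ha2, ha12, ha22⟩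
      · left
        refine ⟨(a, b), ⟨?_, Or.inl ha, hb⟩, ?_⟩
        · intro hEq; exact G.ne_of_adj ha (congrArg Prod.fst hEq)
        · show phi (f a) (g b) = 3
          rw [ha3]; exact phi_three hb2 (hg3 b)
      · have hb3 : g b = 2 ∨ g b = 3 := by have := hg3 b; omega
        rcases hb3 with hb3 | hb3
        · right
          refine ⟨(a1, b), (a2, b), ?_, ⟨?_, Or.inl ha1, hb⟩, ⟨?_, Or.inl ha2, hb⟩, ?_, ?_⟩
          · simp [hne]
          · intro hEq; exact G.ne_of_adj ha1 (congrArg Prod.fst hEq)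
          · intro hEq; exact G.ne_of_adj ha2 (congrArg Prod.fst hEq)
          · show phi (f a1) (g b) = 2; rw [ha12, hb3]; exact phi_two_two
          · show phi (f a2) (g b) = 2; rw [ha22, hb3]; exact phi_two_two
        · left
          refine ⟨(a1, b), ⟨?_, Or.inl ha1, hb⟩, ?_⟩
          · intro hEq; exact G.ne_of_adj ha1 (congrArg Prod.fst hEq)
          · show phi (f a1) (g b) = 3; rw [ha12, hb3]; exact phi_three' (by omega) (by omega)
    · obtain ⟨a, ha, ha2⟩ := exists_closed_two ⟨hf3, hf0, hf1, hfr⟩ u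
      rcases hg0 v h with ⟨b, hb, hb3⟩ | ⟨b1, b2, hne, hb1, hb2, hb12, hb22⟩
      · left
        refine ⟨(a, b), ⟨?_, ha, Or.inl hb⟩, ?_⟩
        · intro hEq; exact H.ne_of_adj hb (congrArg Prod.snd hEq)
        · show phi (f a) (g b) = 3
          rw [hb3]; exact phi_three' ha2 (hf3 a)
      · have ha3 : f a = 2 ∨ f a = 3 := by have := hf3 a; omega
        rcases ha3 with ha3 | ha3
        · right
          refine ⟨(a, b1), (a, b2), ?_, ⟨?_, ha, Or.inl hb1⟩, ⟨?_, ha, Or.inl hb2⟩, ?_, ?_⟩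
          · simp [hne]
          · intro hEq; exact H.ne_of_adj hb1 (congrArg Prod.snd hEq)
          · intro hEq; exact H.ne_of_adj hb2 (congrArg Prod.snd hEq)
          · show phi (f a) (g b1) = 2; rw [ha3, hb12]; exact phi_two_two
          · show phi (f a) (g b2) = 2; rw [ha3, hb22]; exact phi_two_two
        · left
          refine ⟨(a, b1), ⟨?_, ha, Or.inl hb1⟩, ?_⟩
          · intro hEq; exact H.ne_of_adj hb1 (congrArg Prod.snd hEq)
          · show phi (f a) (g b1) = 3; rw [ha3, hb12]; exact phi_three (by omega) (by omega)
  · -- condition for ones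
    rintro ⟨u, v⟩ hp1
    simp only at hp1
    obtain ⟨a, ha, ha2⟩ := exists_closed_two ⟨hf3, hf0, hf1, hfr⟩ u
    obtain ⟨b, hb, hb2⟩ := exists_closed_two ⟨hg3, hg0, hg1, hgr⟩ v
    have hval : 2 ≤ phi (f a) (g b) := phi_ge_two ha2 hb2
    refine ⟨(a, b), ⟨?_, ha, hb⟩, hval⟩
    intro hEq
    have := congrArg (fun p : _ × _ => phi (f p.1) (g p.2)) hEq
    simp only at this
    omega
  · -- restrained condition
    rintro ⟨u, v⟩ hp0
    simp only at hp0
    rcases phi_eq_zero hp0 with h | h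
    · obtain ⟨a, ha, ha0⟩ := hfr u h
      refine ⟨(a, v), ⟨?_, Or.inl ha, Or.inr rfl⟩, ?_⟩
      · intro hEq; exact G.ne_of_adj ha (congrArg Prod.fst hEq)
      · show phi (f a) (g v) = 0; rw [ha0]; exact phi_zero_left _
    · obtain ⟨b, hb, hb0⟩ := hgr v h
      refine ⟨(u, b), ⟨?_, Or.inr rfl, Or.inl hb⟩, ?_⟩
      · intro hEq; exact H.ne_of_adj hb (congrArg Prod.snd hEq)
      · show phi (f u) (g b) = 0; rw [hb0]; exact phi_zero_right _

end RDRDaux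

namespace RDRDaux

def dd {α β : Type*} (f : α → ℕ) (g : β → ℕ) (p : α × β) : ℕ :=
  f p.1 * g p.2 - phi (f p.1) (g p.2)

lemma dd_apply {α β : Type*} (f : α → ℕ) (g : β → ℕ) (u : α) (v : β) :
    dd f g (u, v) = f u * g v - phi (f u) (g v) := rfl

lemma isRDRD_const3 {α : Type*} (G : SimpleGraph α) : IsRDRD G (fun _ => 3) :=
  ⟨fun _ => le_rfl, fun _ h => absurd h (by simp), fun _ h => absurd h (by simp),
   fun _ h => absurd h (by simp)⟩

lemma two_others {γ : Type*} [Fintype γ] [DecidableEq γ] (h3 : 3 ≤ Fintype.card γ) (x : γ) :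
    ∃ a b, a ≠ b ∧ a ≠ x ∧ b ≠ x := by
  have h2 : 1 < (Finset.univ.erase x).card := by
    rw [Finset.card_erase_of_mem (Finset.mem_univ x)]
    simp only [Finset.card_univ]; omega
  obtain ⟨a, ha, b, hb, hab⟩ := Finset.one_lt_card.mp h2
  exact ⟨a, b, hab, (Finset.mem_erase.mp ha).1, (Finset.mem_erase.mp hb).1⟩

lemma all_one {γ : Type*} {K : SimpleGraph γ} {g : γ → ℕ} (hg : IsRDRD K g)
    (h3 : ∀ v, g v ≠ 3) {v0 : γ} (huniq : ∀ v, v ≠ v0 → g v ≠ 2) :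
    ∀ v, v ≠ v0 → g v = 1 := by
  intro v hv
  have hne0 : g v ≠ 0 := by
    intro h0
    rcases hg.2.1 v h0 with ⟨b, _, hb3⟩ | ⟨b1, b2, hne, _, _, hb1, hb2⟩
    · exact h3 b hb3
    · have e1 : b1 = v0 := by by_contra h; exact huniq b1 h hb1
      have e2 : b2 = v0 := by by_contra h; exact huniq b2 h hb2
      exact hne (e1.trans e2.symm)
  have := hg.1 v; have := h3 v; have := huniq v hv; omega

lemma sum_triple {γ : Type*} [DecidableEq γ] (F : γ → ℕ) {a b c : γ}
    (hab : a ≠ b) (hac : a ≠ c) (hbc : b ≠ c) :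
    ∑ x ∈ ({a, b, c} : Finset γ), F x = F a + F b + F c := by
  rw [show ({a, b, c} : Finset γ) = insert a (insert b {c}) from rfl,
    Finset.sum_insert (by simp [hab, hac]), Finset.sum_insert (by simp [hbc]),
    Finset.sum_singleton]
  omega

lemma sum_prod_le {α β : Type*} [Fintype α] [Fintype β] [DecidableEq α] [DecidableEq β]
    (d : α × β → ℕ) (s : Finset α) (t : Finset β) :
    ∑ u ∈ s, ∑ v ∈ t, d (u, v) ≤ ∑ p : α × β, d p := by
  rw [← Finset.sum_product]
  exact Finset.sum_le_sum_of_subset (Finset.subset_univ _)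

-- the key saving estimate
lemma six_le_sum_dd {α β : Type*} [Fintype α] [Fintype β] [DecidableEq α] [DecidableEq β]
    {G : SimpleGraph α} {H : SimpleGraph β} {f : α → ℕ} {g : β → ℕ}
    (hf : IsRDRD G f) (hg : IsRDRD H g)
    (hn : 3 ≤ Fintype.card α) (hm : 3 ≤ Fintype.card β) :
    6 ≤ ∑ p : α × β, dd f g p := by
  have hNα : Nonempty α := Fintype.card_pos_iff.mp (by omega)
  have hNβ : Nonempty β := Fintype.card_pos_iff.mp (by omega)
  obtain ⟨u0, -, hu0⟩ := exists_closed_two hf (Classical.arbitrary α)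
  obtain ⟨v0, -, hv0⟩ := exists_closed_two hg (Classical.arbitrary β)
  by_cases hF3 : ∃ u, f u = 3
  · obtain ⟨u3, hu3⟩ := hF3
    by_cases hG3 : ∃ v, g v = 3
    · obtain ⟨v3, hv3⟩ := hG3
      calc (6 : ℕ) = ∑ u ∈ {u3}, ∑ v ∈ ({v3} : Finset β), dd f g (u, v) := by
            rw [Finset.sum_singleton, Finset.sum_singleton, dd_apply, hu3, hv3]; decide
        _ ≤ _ := sum_prod_le _ _ _
    · -- no 3 in g; v0 has g v0 = 2
      have hv02 : g v0 = 2 := by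
        have := hg.1 v0; have : g v0 ≠ 3 := fun h => hG3 ⟨v0, h⟩; omega
      by_cases hsec : ∃ v1, v1 ≠ v0 ∧ g v1 = 2
      · obtain ⟨v1, hv1ne, hv12⟩ := hsec
        calc (6 : ℕ) = ∑ u ∈ {u3}, ∑ v ∈ ({v0, v1} : Finset β), dd f g (u, v) := by
              rw [Finset.sum_singleton, Finset.sum_pair (Ne.symm hv1ne),
                dd_apply, dd_apply, hu3, hv02, hv12]; decide
          _ ≤ _ := sum_prod_le _ _ _
      · have hall : ∀ v, v ≠ v0 → g v = 1 :=
          all_one hg (fun v h => hG3 ⟨v, h⟩) (fun v hv h2 => hsec ⟨v, hv, h2⟩)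
        obtain ⟨v1, v2, h12, h10, h20⟩ := two_others hm v0
        have e1 := hall v1 h10
        have e2 := hall v2 h20
        have : (7 : ℕ) = ∑ u ∈ {u3}, ∑ v ∈ ({v0, v1, v2} : Finset β), dd f g (u, v) := by
          rw [Finset.sum_singleton,
            show ({v0, v1, v2} : Finset β) = insert v0 {v1, v2} from rfl,
            Finset.sum_insert (by simp [Ne.symm h10, Ne.symm h20]),
            Finset.sum_pair h12, dd_apply, dd_apply, dd_apply, hu3, hv02, e1, e2]; decide
        have hle := sum_prod_le (dd f g) {u3} ({v0, v1, v2} : Finset β)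
        omega
  · -- no 3 in f
    have hu02 : f u0 = 2 := by
      have := hf.1 u0; have : f u0 ≠ 3 := fun h => hF3 ⟨u0, h⟩; omega
    by_cases hG3 : ∃ v, g v = 3
    · obtain ⟨v3, hv3⟩ := hG3
      by_cases hsec : ∃ u1, u1 ≠ u0 ∧ f u1 = 2
      · obtain ⟨u1, hu1ne, hu12⟩ := hsec
        calc (6 : ℕ) = ∑ u ∈ ({u0, u1} : Finset α), ∑ v ∈ ({v3} : Finset β), dd f g (u, v) := by
              rw [Finset.sum_pair (Ne.symm hu1ne), Finset.sum_singleton, Finset.sum_singleton,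
                dd_apply, dd_apply, hu02, hu12, hv3]; decide
          _ ≤ _ := sum_prod_le _ _ _
      · have hall : ∀ u, u ≠ u0 → f u = 1 :=
          all_one hf (fun u h => hF3 ⟨u, h⟩) (fun u hu h2 => hsec ⟨u, hu, h2⟩)
        obtain ⟨u1, u2, h12, h10, h20⟩ := two_others hn u0
        have e1 := hall u1 h10
        have e2 := hall u2 h20
        have : (7 : ℕ) = ∑ u ∈ ({u0, u1, u2} : Finset α), ∑ v ∈ ({v3} : Finset β), dd f g (u, v) := by
          rw [show ({u0, u1, u2} : Finset α) = insert u0 {u1, u2} from rfl,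
            Finset.sum_insert (by simp [Ne.symm h10, Ne.symm h20]),
            Finset.sum_pair h12, Finset.sum_singleton, Finset.sum_singleton, Finset.sum_singleton,
            dd_apply, dd_apply, dd_apply, hu02, e1, e2, hv3]; decide
        have hle := sum_prod_le (dd f g) ({u0, u1, u2} : Finset α) {v3}
        omega
    · -- no 3 anywhere
      have hv02 : g v0 = 2 := by
        have := hg.1 v0; have : g v0 ≠ 3 := fun h => hG3 ⟨v0, h⟩; omega
      by_cases hsecf : ∃ u1, u1 ≠ u0 ∧ f u1 = 2
      · obtain ⟨u1, hu1ne, hu12⟩ := hsecf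
        by_cases hsecg : ∃ v1, v1 ≠ v0 ∧ g v1 = 2
        · obtain ⟨v1, hv1ne, hv12⟩ := hsecg
          have : (8 : ℕ) = ∑ u ∈ ({u0, u1} : Finset α), ∑ v ∈ ({v0, v1} : Finset β), dd f g (u, v) := by
            rw [Finset.sum_pair (Ne.symm hu1ne), Finset.sum_pair (Ne.symm hv1ne),
              Finset.sum_pair (Ne.symm hv1ne), dd_apply, dd_apply, dd_apply, dd_apply,
              hu02, hu12, hv02, hv12]; decide
          have hle := sum_prod_le (dd f g) ({u0, u1} : Finset α) ({v0, v1} : Finset β)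
          omega
        · have hall : ∀ v, v ≠ v0 → g v = 1 :=
            all_one hg (fun v h => hG3 ⟨v, h⟩) (fun v hv h2 => hsecg ⟨v, hv, h2⟩)
          obtain ⟨v1, v2, h12, h10, h20⟩ := two_others hm v0
          have e1 := hall v1 h10
          calc (6 : ℕ) = ∑ u ∈ ({u0, u1} : Finset α), ∑ v ∈ ({v0, v1} : Finset β), dd f g (u, v) := by
                rw [Finset.sum_pair (Ne.symm hu1ne), Finset.sum_pair (Ne.symm h10),
                  Finset.sum_pair (Ne.symm h10), dd_apply, dd_apply, dd_apply, dd_apply,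
                  hu02, hu12, hv02, e1]; decide
            _ ≤ _ := sum_prod_le _ _ _
      · have hallf : ∀ u, u ≠ u0 → f u = 1 :=
          all_one hf (fun u h => hF3 ⟨u, h⟩) (fun u hu h2 => hsecf ⟨u, hu, h2⟩)
        by_cases hsecg : ∃ v1, v1 ≠ v0 ∧ g v1 = 2
        · obtain ⟨v1, hv1ne, hv12⟩ := hsecg
          obtain ⟨u1, u2, h12, h10, h20⟩ := two_others hn u0
          have e1 := hallf u1 h10
          calc (6 : ℕ) = ∑ u ∈ ({u0, u1} : Finset α), ∑ v ∈ ({v0, v1} : Finset β), dd f g (u, v) := by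
                rw [Finset.sum_pair (Ne.symm h10), Finset.sum_pair (Ne.symm hv1ne),
                  Finset.sum_pair (Ne.symm hv1ne), dd_apply, dd_apply, dd_apply, dd_apply,
                  hu02, e1, hv02, hv12]; decide
            _ ≤ _ := sum_prod_le _ _ _
        · have hallg : ∀ v, v ≠ v0 → g v = 1 :=
            all_one hg (fun v h => hG3 ⟨v, h⟩) (fun v hv h2 => hsecg ⟨v, hv, h2⟩)
          obtain ⟨u1, u2, hu12, hu10, hu20⟩ := two_others hn u0
          obtain ⟨v1, v2, hv12, hv10, hv20⟩ := two_others hm v0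
          have ef1 := hallf u1 hu10
          have ef2 := hallf u2 hu20
          have eg1 := hallg v1 hv10
          have eg2 := hallg v2 hv20
          have hin : ∀ u : α, ∑ v ∈ ({v0, v1, v2} : Finset β), dd f g (u, v)
              = dd f g (u, v0) + dd f g (u, v1) + dd f g (u, v2) := fun u =>
            sum_triple _ (Ne.symm hv10) (Ne.symm hv20) hv12
          calc (6 : ℕ) = ∑ u ∈ ({u0, u1, u2} : Finset α), ∑ v ∈ ({v0, v1, v2} : Finset β), dd f g (u, v) := by
                rw [sum_triple _ (Ne.symm hu10) (Ne.symm hu20) hu12, hin, hin, hin]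
                simp only [dd_apply]
                rw [hu02, ef1, ef2, hv02, eg1, eg2]; decide
            _ ≤ _ := sum_prod_le _ _ _

end RDRDaux


theorem stmt3 {α β : Type*} [Fintype α] [Fintype β]
    (G : SimpleGraph α) (H : SimpleGraph β)
    (hG : G.Connected) (hH : H.Connected)
    (hn : 3 ≤ Fintype.card α) (hm : 3 ≤ Fintype.card β) :
    (gammaRdR (strongProd G H) : ℤ) ≤ (gammaRdR G : ℤ) * gammaRdR H - 6 := by
  classical
  have hneG : {w | ∃ f, IsRDRD G f ∧ ∑ v, f v = w}.Nonempty :=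
    ⟨_, ⟨fun _ => 3, RDRDaux.isRDRD_const3 G, rfl⟩⟩
  have hneH : {w | ∃ g, IsRDRD H g ∧ ∑ v, g v = w}.Nonempty :=
    ⟨_, ⟨fun _ => 3, RDRDaux.isRDRD_const3 H, rfl⟩⟩
  obtain ⟨f, hf, hfw⟩ : ∃ f, IsRDRD G f ∧ ∑ v, f v = gammaRdR G := Nat.sInf_mem hneG
  obtain ⟨g, hg, hgw⟩ : ∃ g, IsRDRD H g ∧ ∑ v, g v = gammaRdR H := Nat.sInf_mem hneH
  have hmem : (∑ p : α × β, RDRDaux.phi (f p.1) (g p.2)) ∈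
      {w | ∃ h, IsRDRD (strongProd G H) h ∧ ∑ v, h v = w} :=
    ⟨_, RDRDaux.isRDRD_phi hf hg, rfl⟩
  have hle : gammaRdR (strongProd G H) ≤ ∑ p : α × β, RDRDaux.phi (f p.1) (g p.2) :=
    Nat.sInf_le hmem
  have hsplit : (∑ p : α × β, RDRDaux.phi (f p.1) (g p.2)) + ∑ p : α × β, RDRDaux.dd f g p
      = ∑ p : α × β, f p.1 * g p.2 := by
    rw [← Finset.sum_add_distrib]
    exact Finset.sum_congr rfl fun p _ => Nat.add_sub_cancel' (RDRDaux.phi_le_mul _ _)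
  have hprod : ∑ p : α × β, f p.1 * g p.2 = (∑ u, f u) * (∑ v, g v) := by
    rw [← Finset.univ_product_univ, Finset.sum_product, Finset.sum_mul_sum]
  have hkey := RDRDaux.six_le_sum_dd hf hg hn hm
  have hfin : gammaRdR (strongProd G H) + 6 ≤ gammaRdR G * gammaRdR H := by
    rw [← hfw, ← hgw, ← hprod]; omega
  rw [← Nat.cast_mul]
  omega
end

section
/- For n ≥ 3, γ_rdR(C_n ⊙ K₁) = ⌈7n/3⌉ if n ≡ 0 or 1 (mod 3), and ⌈7n/3⌉ + 1 if n ≡ 2 (mod 3). -/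
open SimpleGraph Finset

namespace RDRDAux

open Fin.CommRing

variable {n : ℕ} [NeZero n]

local notation "CG" => corona (SimpleGraph.cycleGraph n) (⊥ : SimpleGraph (Fin 1))

lemma val_one (hn : 3 ≤ n) : (1 : Fin n).val = 1 := by
  rw [Fin.val_one']; exact Nat.mod_eq_of_lt (by omega)

lemma one_ne_zero' (hn : 3 ≤ n) : (1 : Fin n) ≠ 0 := by
  intro h
  have := congrArg Fin.val h
  rw [val_one hn] at this
  simp at this

lemma two_ne_zero' (hn : 3 ≤ n) : (1 + 1 : Fin n) ≠ 0 := by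
  intro h
  have h1 := congrArg Fin.val h
  simp only [Fin.add_def, val_one hn, Fin.val_zero] at h1
  rw [Nat.mod_eq_of_lt (by omega)] at h1
  omega

lemma sub_one_ne (hn : 3 ≤ n) (a : Fin n) : a - 1 ≠ a := fun h =>
  one_ne_zero' hn (sub_eq_self.mp h)

lemma sub_two_ne (hn : 3 ≤ n) (a : Fin n) : a - 1 - 1 ≠ a := fun h =>
  two_ne_zero' hn (sub_eq_self.mp (by rwa [sub_sub] at h))

lemma cyc_adj_succ (hn : 3 ≤ n) (i : Fin n) : (SimpleGraph.cycleGraph n).Adj i (i + 1) := by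
  rw [SimpleGraph.cycleGraph_adj']
  right
  have e : i + 1 - i = 1 := by ring
  have e2 := congrArg Fin.val e
  rw [val_one hn] at e2
  exact e2

lemma cyc_adj_pred (hn : 3 ≤ n) (i : Fin n) : (SimpleGraph.cycleGraph n).Adj i (i - 1) := by
  rw [SimpleGraph.cycleGraph_adj']
  left
  have e : i - (i - 1) = 1 := by ring
  have e2 := congrArg Fin.val e
  rw [val_one hn] at e2
  exact e2

lemma fin1_eq_zero (a : Fin 1) : a = 0 := Subsingleton.elim _ _

lemma adj_inr (hn : 3 ≤ n) (i : Fin n) (a : Fin 1) (u : Fin n ⊕ Fin n × Fin 1) :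
    (CG).Adj (.inr (i, a)) u ↔ u = .inl i := by
  constructor
  · intro h
    match u with
    | .inl v =>
      have : v = i := h
      rw [this]
    | .inr (v, b) => exact absurd h.2 (by simp)
  · rintro rfl
    show i = i
    rfl

lemma adj_inl (hn : 3 ≤ n) (i : Fin n) (u : Fin n ⊕ Fin n × Fin 1) :
    (CG).Adj (.inl i) u ↔ u = .inl (i + 1) ∨ u = .inl (i - 1) ∨ u = .inr (i, 0) := by
  constructor
  · intro h
    match u with
    | .inl v =>
      have hc : (SimpleGraph.cycleGraph n).Adj i v := h
      rw [SimpleGraph.cycleGraph_adj'] at hc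
      rcases hc with h2 | h2
      · right; left
        have e : i - v = 1 := Fin.ext (by rw [val_one hn]; exact h2)
        have : v = i - 1 := by rw [← e]; ring
        rw [this]
      · left
        have e : v - i = 1 := Fin.ext (by rw [val_one hn]; exact h2)
        have : v = i + 1 := by rw [← e]; ring
        rw [this]
    | .inr (v, b) =>
      have hvi : i = v := h
      subst hvi
      rw [fin1_eq_zero b]
      right; right; rfl
  · intro h
    rcases h with h | h | h <;> rw [h]
    · exact cyc_adj_succ hn i
    · exact cyc_adj_pred hn i
    · show i = i
      rfl

lemma lower_bound (hn : 3 ≤ n) (f : (Fin n ⊕ Fin n × Fin 1) → ℕ) (hf : IsRDRD (CG) f) :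
    (if n % 3 = 2 then (7 * n + 2) / 3 + 1 else (7 * n + 2) / 3) ≤ ∑ v, f v := by
  obtain ⟨hle, hdom, hone, hres⟩ := hf
  set g : Fin n → ℕ := fun i => f (.inl i) + f (.inr (i, 0)) with hg
  -- pendants get at least 1
  have hp1 : ∀ i : Fin n, 1 ≤ f (.inr (i, 0)) := by
    intro i
    by_contra hcon
    have hp0 : f (.inr (i, (0 : Fin 1))) = 0 := by omega
    obtain ⟨u, hu, hu0⟩ := hres _ hp0
    rw [adj_inr hn] at hu
    subst hu
    rcases hdom _ hp0 with ⟨u, hu, hu3⟩ | ⟨u, w, huw, hu, hw, hu2, hw2⟩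
    · rw [adj_inr hn] at hu; subst hu; omega
    · rw [adj_inr hn] at hu hw
      exact huw (hu.trans hw.symm)
  -- pendant = 1 forces support ≥ 2
  have hp2 : ∀ i : Fin n, f (.inr (i, 0)) = 1 → 2 ≤ f (.inl i) := by
    intro i h
    obtain ⟨u, hu, h2⟩ := hone _ h
    rw [adj_inr hn] at hu
    subst hu
    exact h2
  have hg2 : ∀ i, 2 ≤ g i := by
    intro i
    have h1 := hp1 i
    by_cases h : f (.inr (i, (0 : Fin 1))) = 1
    · have := hp2 i h; simp only [hg]; omega
    · simp only [hg]; omega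
  have hgp : ∀ i, g i = 2 → f (.inl i) = 0 ∧ f (.inr (i, (0:Fin 1))) = 2 := by
    intro i h
    have h1 := hp1 i
    by_cases h2 : f (.inr (i, (0 : Fin 1))) = 1
    · have := hp2 i h2; simp only [hg] at h; omega
    · simp only [hg] at h; omega
  have hg3' : ∀ i, g i = 3 → f (.inl i) ≤ 2 := by
    intro i h
    have h1 := hp1 i
    simp only [hg] at h
    omega
  -- window bound
  have hw7 : ∀ i : Fin n, 7 ≤ g i + g (i + 1) + g (i + 1 + 1) := by
    intro i
    by_contra hcon
    have e1 : g i = 2 := by have := hg2 i; have := hg2 (i+1); have := hg2 (i+1+1); omega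
    have e2 : g (i + 1) = 2 := by
      have := hg2 i; have := hg2 (i+1); have := hg2 (i+1+1); omega
    have e3 : g (i + 1 + 1) = 2 := by
      have := hg2 i; have := hg2 (i+1); have := hg2 (i+1+1); omega
    obtain ⟨hc1, hq1⟩ := hgp _ e1
    obtain ⟨hc2, hq2⟩ := hgp _ e2
    obtain ⟨hc3, hq3⟩ := hgp _ e3
    have epred : i + 1 - 1 = i := by ring
    rcases hdom (.inl (i + 1)) hc2 with ⟨u, hu, hu3⟩ | ⟨u, w, huw, hu, hw, hu2, hw2⟩
    · rw [adj_inl hn] at hu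
      rcases hu with h | h | h <;> rw [h] at hu3
      · rw [hc3] at hu3; omega
      · rw [epred, hc1] at hu3; omega
      · rw [hq2] at hu3; omega
    · rw [adj_inl hn] at hu hw
      have keyu : u = Sum.inr (i + 1, (0:Fin 1)) := by
        rcases hu with h | h | h
        · rw [h] at hu2; rw [hc3] at hu2; omega
        · rw [h, epred] at hu2; rw [hc1] at hu2; omega
        · exact h
      have keyw : w = Sum.inr (i + 1, (0:Fin 1)) := by
        rcases hw with h | h | h
        · rw [h] at hw2; rw [hc3] at hw2; omega
        · rw [h, epred] at hw2; rw [hc1] at hw2; omega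
        · exact h
      exact huw (keyu.trans keyw.symm)
  -- sum identities
  have hsumT : ∑ v, f v = ∑ i, g i := by
    rw [Fintype.sum_sum_type, Fintype.sum_prod_type]
    simp only [Fin.sum_univ_one]
    rw [← Finset.sum_add_distrib]
  set T := ∑ i, g i with hT
  have hshift : ∀ k : Fin n, ∑ i, g (i + k) = T :=
    fun k => Fintype.sum_equiv (Equiv.addRight k) _ _ (fun i => rfl)
  have h3T : ∑ i : Fin n, (g i + g (i + 1) + g (i + 1 + 1)) = 3 * T := by
    rw [Finset.sum_add_distrib, Finset.sum_add_distrib]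
    have e1 : ∑ i : Fin n, g (i + 1 + 1) = ∑ i : Fin n, g (i + 1) :=
      Fintype.sum_equiv (Equiv.addRight 1) _ _ (fun i => rfl)
    rw [e1, hshift 1, ← hT]
    ring
  have h7n : 7 * n ≤ 3 * T := by
    rw [← h3T]
    calc 7 * n = ∑ _i : Fin n, 7 := by
          rw [Finset.sum_const, Finset.card_univ, Fintype.card_fin, smul_eq_mul]; ring
      _ ≤ _ := Finset.sum_le_sum fun i _ => hw7 i
  rw [hsumT]
  by_cases hmod : n % 3 = 2
  swap
  · simp only [hmod, if_false]
    omega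
  simp only [hmod, if_true]
  by_contra hcon
  have h3T1 : 3 * T = 7 * n + 1 := by omega
  set W : Fin n → ℕ := fun i => g i + g (i + 1) + g (i + 1 + 1) with hW
  have hWsum : ∑ i, W i = 7 * n + 1 := by rw [hW]; rw [h3T]; omega
  have hsplit : ∀ s : Finset (Fin n), ∑ i ∈ s, W i + 7 * (n - s.card) ≤ 7 * n + 1 := by
    intro s
    have h1 : ∑ i ∈ sᶜ, (7 : ℕ) ≤ ∑ i ∈ sᶜ, W i := Finset.sum_le_sum (fun i _ => hw7 i)
    have h2 : ∑ i ∈ s, W i + ∑ i ∈ sᶜ, W i = 7 * n + 1 := by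
      rw [Finset.sum_add_sum_compl, hWsum]
    have h3 : ∑ i ∈ sᶜ, (7:ℕ) = (n - s.card) * 7 := by
      rw [Finset.sum_const, Finset.card_compl, Fintype.card_fin, smul_eq_mul]
    omega
  -- all g values are ≤ 3
  have hg3 : ∀ i, g i ≤ 3 := by
    intro j
    by_contra hcon4
    have h4 : 4 ≤ g j := by omega
    have ea : j - 1 + 1 = j := by ring
    have eb : j - 1 - 1 + 1 = j - 1 := by ring
    have hWa : 8 ≤ W j := by
      simp only [hW]
      have := hg2 (j+1); have := hg2 (j+1+1); omega
    have hWb : 8 ≤ W (j - 1) := by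
      simp only [hW]
      rw [ea]
      have := hg2 (j-1); have := hg2 (j+1); omega
    have hWc : 8 ≤ W (j - 1 - 1) := by
      simp only [hW]
      rw [eb, ea]
      have := hg2 (j-1-1); have := hg2 (j-1); omega
    have hne1 := sub_one_ne hn j
    have hne2 := sub_two_ne hn j
    have hne3 : j - 1 - 1 ≠ j - 1 := sub_one_ne hn (j - 1)
    have hcard : ({j - 1 - 1, j - 1, j} : Finset (Fin n)).card = 3 := by
      rw [Finset.card_insert_of_notMem (by simp [hne3, hne2]),
        Finset.card_insert_of_notMem (by simp [hne1]), Finset.card_singleton]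
    have hs : 24 ≤ ∑ i ∈ ({j - 1 - 1, j - 1, j} : Finset (Fin n)), W i := by
      rw [Finset.sum_insert (by simp [hne3, hne2]), Finset.sum_insert (by simp [hne1]),
        Finset.sum_singleton]
      omega
    have := hsplit {j - 1 - 1, j - 1, j}
    rw [hcard] at this
    omega
  -- exactly one window of weight 8
  have hex : ∃ j, 8 ≤ W j := by
    by_contra hcon8
    push_neg at hcon8
    have : ∑ i, W i ≤ ∑ _i : Fin n, 7 := Finset.sum_le_sum fun i _ => by have := hcon8 i; omega
    rw [Finset.sum_const, Finset.card_univ, Fintype.card_fin, smul_eq_mul, hWsum] at this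
    omega
  obtain ⟨j, hj8⟩ := hex
  have huniq : ∀ i, i ≠ j → W i = 7 := by
    intro i hij
    by_contra hcon7
    have h8 : 8 ≤ W i := by have := hw7 i; simp only [hW] at hcon7 ⊢; omega
    have hcard : ({i, j} : Finset (Fin n)).card = 2 := by
      rw [Finset.card_insert_of_notMem (by simp [hij]), Finset.card_singleton]
    have hs : 16 ≤ ∑ x ∈ ({i, j} : Finset (Fin n)), W x := by
      rw [Finset.sum_insert (by simp [hij]), Finset.sum_singleton]
      omega
    have := hsplit {i, j}
    rw [hcard] at this
    omega
  have hWj8 : W j = 8 := by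
    have h2 : ∑ i ∈ ({j}ᶜ : Finset (Fin n)), W i = ∑ _i ∈ ({j}ᶜ : Finset (Fin n)), 7 :=
      Finset.sum_congr rfl fun i hi => huniq i (by simpa using hi)
    have h3 : ∑ i ∈ ({j} : Finset (Fin n)), W i + ∑ i ∈ ({j}ᶜ : Finset (Fin n)), W i
        = 7 * n + 1 := by rw [Finset.sum_add_sum_compl, hWsum]
    rw [Finset.sum_singleton] at h3
    rw [Finset.sum_const, Finset.card_compl, Fintype.card_fin, Finset.card_singleton,
      smul_eq_mul] at h2
    omega
  -- no adjacent 3's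
  have hnadj : ∀ t : Fin n, ¬(g t = 3 ∧ g (t + 1) = 3) := by
    rintro t ⟨h1, h2⟩
    have hA : 8 ≤ W t := by
      simp only [hW]
      have := hg2 (t + 1 + 1); omega
    have hB : 8 ≤ W (t - 1) := by
      simp only [hW]
      have ea : t - 1 + 1 = t := by ring
      rw [ea]
      have := hg2 (t - 1); omega
    rcases eq_or_ne t j with rfl | hne
    · have := huniq (t - 1) (sub_one_ne hn t)
      omega
    · have := huniq t hne
      omega
  -- window at j is (3,2,3)
  have hWjval : g j + g (j + 1) + g (j + 1 + 1) = 8 := hWj8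
  have hj1 : g j = 3 ∧ g (j + 1) = 2 ∧ g (j + 1 + 1) = 3 := by
    have c1 := hg2 j; have c2 := hg2 (j+1); have c3 := hg2 (j+1+1)
    have d1 := hg3 j; have d2 := hg3 (j+1); have d3 := hg3 (j+1+1)
    have n1 := hnadj j
    have n2 := hnadj (j + 1)
    refine ⟨?_, ?_, ?_⟩ <;> omega
  obtain ⟨hgj, hgj1, hgj2⟩ := hj1
  -- neighbors of the special window
  have ea : j - 1 + 1 = j := by ring
  have eb : j - 1 - 1 + 1 = j - 1 := by ring
  have hgm1 : g (j - 1) = 2 := by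
    have := huniq (j - 1) (sub_one_ne hn j)
    simp only [hW] at this
    rw [ea] at this
    omega
  have hgm2 : g (j - 1 - 1) = 2 := by
    have := huniq (j - 1 - 1) (sub_two_ne hn j)
    simp only [hW] at this
    rw [eb, ea] at this
    omega
  have hne4 : j + 1 + 1 ≠ j := by
    have := sub_two_ne hn (j + 1 + 1)
    have e : j + 1 + 1 - 1 - 1 = j := by ring
    rw [e] at this
    exact fun hcon' => this hcon'.symm
  have hgp3 : g (j + 1 + 1 + 1) = 2 ∧ g (j + 1 + 1 + 1 + 1) = 2 := by
    have := huniq (j + 1 + 1) hne4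
    simp only [hW] at this
    have := hg2 (j + 1 + 1 + 1); have := hg2 (j + 1 + 1 + 1 + 1)
    omega
  obtain ⟨hgp31, hgp32⟩ := hgp3
  -- extract vertex values
  obtain ⟨hcm1, hqm1⟩ := hgp _ hgm1
  obtain ⟨hcm2, _⟩ := hgp _ hgm2
  obtain ⟨hc1, hq1⟩ := hgp _ hgj1
  obtain ⟨hc3, hq3⟩ := hgp _ hgp31
  obtain ⟨hc4, _⟩ := hgp _ hgp32
  have hcjle : f (.inl j) ≤ 2 := hg3' _ hgj
  have hcj2le : f (.inl (j + 1 + 1)) ≤ 2 := hg3' _ hgj2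
  -- f(inl j) = 2 via domination at inl (j-1)
  have hcj : f (.inl j) = 2 := by
    have emm : j - 1 - 1 = j - 1 - 1 := rfl
    rcases hdom (.inl (j - 1)) hcm1 with ⟨u, hu, hu3⟩ | ⟨u, w, huw, hu, hw, hu2, hw2⟩
    · rw [adj_inl hn] at hu
      rcases hu with h | h | h <;> rw [h] at hu3
      · rw [ea] at hu3; omega
      · rw [hcm2] at hu3; omega
      · rw [hqm1] at hu3; omega
    · rw [adj_inl hn] at hu hw
      have keyu : f (.inl j) = 2 ∨ u = Sum.inr (j - 1, (0:Fin 1)) := by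
        rcases hu with h | h | h
        · rw [h, ea] at hu2; exact Or.inl hu2
        · rw [h] at hu2; rw [hcm2] at hu2; omega
        · exact Or.inr h
      have keyw : f (.inl j) = 2 ∨ w = Sum.inr (j - 1, (0:Fin 1)) := by
        rcases hw with h | h | h
        · rw [h, ea] at hw2; exact Or.inl hw2
        · rw [h] at hw2; rw [hcm2] at hw2; omega
        · exact Or.inr h
      rcases keyu with h | h
      · exact h
      rcases keyw with h' | h'
      · exact h'
      · exact absurd (h.trans h'.symm) huw
  -- f(inl (j+1+1)) = 2 via domination at inl (j+1+1+1)
  have hcj2 : f (.inl (j + 1 + 1)) = 2 := by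
    have ec : j + 1 + 1 + 1 - 1 = j + 1 + 1 := by ring
    rcases hdom (.inl (j + 1 + 1 + 1)) hc3 with ⟨u, hu, hu3⟩ | ⟨u, w, huw, hu, hw, hu2, hw2⟩
    · rw [adj_inl hn] at hu
      rcases hu with h | h | h <;> rw [h] at hu3
      · rw [hc4] at hu3; omega
      · rw [ec] at hu3; omega
      · rw [hq3] at hu3; omega
    · rw [adj_inl hn] at hu hw
      have keyu : f (.inl (j + 1 + 1)) = 2 ∨ u = Sum.inr (j + 1 + 1 + 1, (0:Fin 1)) := by
        rcases hu with h | h | h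
        · rw [h] at hu2; rw [hc4] at hu2; omega
        · rw [h, ec] at hu2; exact Or.inl hu2
        · exact Or.inr h
      have keyw : f (.inl (j + 1 + 1)) = 2 ∨ w = Sum.inr (j + 1 + 1 + 1, (0:Fin 1)) := by
        rcases hw with h | h | h
        · rw [h] at hw2; rw [hc4] at hw2; omega
        · rw [h, ec] at hw2; exact Or.inl hw2
        · exact Or.inr h
      rcases keyu with h | h
      · exact h
      rcases keyw with h' | h'
      · exact h'
      · exact absurd (h.trans h'.symm) huw
  -- restrained condition at inl (j+1) fails
  obtain ⟨u, hu, hu0⟩ := hres (.inl (j + 1)) hc1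
  rw [adj_inl hn] at hu
  have ed : j + 1 - 1 = j := by ring
  rcases hu with h | h | h <;> rw [h] at hu0
  · rw [hcj2] at hu0; omega
  · rw [ed, hcj] at hu0; omega
  · rw [hq1] at hu0; omega

def FFc (n : ℕ) : (Fin n ⊕ Fin n × Fin 1) → ℕ
  | .inl i => if i.val % 3 = 2 ∨ 3 * (n / 3) ≤ i.val then 2 else 0
  | .inr (i, _) => if i.val % 3 = 2 ∨ 3 * (n / 3) ≤ i.val then 1 else 2

lemma sum_blocks (k : ℕ) :
    ∑ t ∈ Finset.range (3 * k), (if t % 3 = 2 then (3:ℕ) else 2) = 7 * k := by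
  induction k with
  | zero => simp
  | succ k ih =>
    have e : 3 * (k + 1) = 3 * k + 1 + 1 + 1 := by ring
    rw [e, Finset.sum_range_succ, Finset.sum_range_succ, Finset.sum_range_succ, ih]
    have e3 : (3 * k + 1 + 1) % 3 = 2 := by omega
    rw [if_neg (by omega), if_neg (by omega), if_pos e3]
    ring

omit [NeZero n] in
lemma FF_sum (hn : 3 ≤ n) : ∑ v, FFc n v = 7 * (n / 3) + 3 * (n % 3) := by
  rw [Fintype.sum_sum_type, Fintype.sum_prod_type]
  simp only [Fin.sum_univ_one]
  rw [← Finset.sum_add_distrib]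
  have h1 : ∀ i : Fin n, FFc n (.inl i) + FFc n (.inr (i, 0)) =
      (fun t => if t % 3 = 2 ∨ 3 * (n / 3) ≤ t then (3:ℕ) else 2) i.val := by
    intro i
    simp only [FFc]
    by_cases h : i.val % 3 = 2 ∨ 3 * (n / 3) ≤ i.val <;> simp [h]
  rw [Finset.sum_congr rfl (fun i _ => h1 i),
    Fin.sum_univ_eq_sum_range (fun t => if t % 3 = 2 ∨ 3 * (n / 3) ≤ t then (3:ℕ) else 2)]
  have hkn : 3 * (n / 3) ≤ n := by omega
  rw [← Finset.sum_range_add_sum_Ico _ hkn]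
  have h2 : ∑ t ∈ Finset.range (3 * (n / 3)),
      (if t % 3 = 2 ∨ 3 * (n / 3) ≤ t then (3:ℕ) else 2) = 7 * (n / 3) := by
    have hc : ∀ t ∈ Finset.range (3 * (n / 3)),
        (if t % 3 = 2 ∨ 3 * (n / 3) ≤ t then (3:ℕ) else 2)
          = (if t % 3 = 2 then (3:ℕ) else 2) := by
      intro t ht
      rw [Finset.mem_range] at ht
      by_cases h : t % 3 = 2 <;> simp [h, Nat.not_le.mpr ht]
    rw [Finset.sum_congr rfl hc, sum_blocks]
  have h3 : ∑ t ∈ Finset.Ico (3 * (n / 3)) n,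
      (if t % 3 = 2 ∨ 3 * (n / 3) ≤ t then (3:ℕ) else 2) = 3 * (n % 3) := by
    have hc : ∀ t ∈ Finset.Ico (3 * (n / 3)) n,
        (if t % 3 = 2 ∨ 3 * (n / 3) ≤ t then (3:ℕ) else 2) = 3 := by
      intro t ht
      rw [Finset.mem_Ico] at ht
      exact if_pos (Or.inr ht.1)
    rw [Finset.sum_congr rfl hc, Finset.sum_const, Nat.card_Ico, smul_eq_mul]
    omega
  rw [h2, h3]

lemma val_add_one (hn : 3 ≤ n) (i : Fin n) : (i + 1).val = (i.val + 1) % n := by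
  simp only [Fin.add_def, val_one hn]

lemma val_sub_one (hn : 3 ≤ n) (i : Fin n) : (i - 1).val = (n - 1 + i.val) % n := by
  simp only [Fin.sub_def, val_one hn]

lemma FF_isRDRD (hn : 3 ≤ n) : IsRDRD (CG) (FFc n) := by
  have hkn : 3 * (n / 3) ≤ n := by omega
  have hpred : ∀ i : Fin n, 1 ≤ i.val → (i - 1).val = i.val - 1 := by
    intro i h1
    have hi := i.isLt
    rw [val_sub_one hn]
    have e : n - 1 + i.val = n + (i.val - 1) := by omega
    rw [e, Nat.add_mod_left, Nat.mod_eq_of_lt (by omega)]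
  have hpred0 : ∀ i : Fin n, i.val = 0 → (i - 1).val = n - 1 := by
    intro i h0
    rw [val_sub_one hn, h0, Nat.add_zero, Nat.mod_eq_of_lt (by omega)]
  have hsucc : ∀ i : Fin n, i.val + 1 < n → (i + 1).val = i.val + 1 := by
    intro i h
    rw [val_add_one hn, Nat.mod_eq_of_lt h]
  refine ⟨?_, ?_, ?_, ?_⟩
  · rintro (i | ⟨i, a⟩) <;> simp only [FFc] <;> split <;> omega
  · rintro (i | ⟨i, a⟩) h0
    · have hC : ¬(i.val % 3 = 2 ∨ 3 * (n / 3) ≤ i.val) := by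
        intro hc
        simp only [FFc] at h0
        rw [if_pos hc] at h0
        omega
      push_neg at hC
      obtain ⟨hC1, hC2⟩ := hC
      right
      rcases (by omega : i.val % 3 = 0 ∨ i.val % 3 = 1) with hm | hm
      · refine ⟨.inl (i - 1), .inr (i, 0), by simp, (adj_inl hn i _).mpr (Or.inr (Or.inl rfl)),
          (adj_inl hn i _).mpr (Or.inr (Or.inr rfl)), ?_, ?_⟩
        · simp only [FFc]
          refine if_pos ?_
          rcases Nat.eq_zero_or_pos i.val with h0' | h0'
          · rw [hpred0 i h0']
            omega
          · rw [hpred i h0']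
            left; omega
        · simp only [FFc]
          exact if_neg (by omega)
      · have hlt : i.val + 1 < n := by omega
        refine ⟨.inl (i + 1), .inr (i, 0), by simp, (adj_inl hn i _).mpr (Or.inl rfl),
          (adj_inl hn i _).mpr (Or.inr (Or.inr rfl)), ?_, ?_⟩
        · simp only [FFc]
          refine if_pos ?_
          rw [hsucc i hlt]
          left; omega
        · simp only [FFc]
          exact if_neg (by omega)
    · exfalso
      simp only [FFc] at h0
      split at h0 <;> omega
  · rintro (i | ⟨i, a⟩) h1
    · exfalso
      simp only [FFc] at h1
      split at h1 <;> omega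
    · refine ⟨.inl i, (adj_inr hn i a _).mpr rfl, ?_⟩
      simp only [FFc] at h1 ⊢
      by_cases h : i.val % 3 = 2 ∨ 3 * (n / 3) ≤ i.val
      · rw [if_pos h]
      · rw [if_neg h] at h1
        omega
  · rintro (i | ⟨i, a⟩) h0
    · have hC : ¬(i.val % 3 = 2 ∨ 3 * (n / 3) ≤ i.val) := by
        intro hc
        simp only [FFc] at h0
        rw [if_pos hc] at h0
        omega
      push_neg at hC
      obtain ⟨hC1, hC2⟩ := hC
      rcases (by omega : i.val % 3 = 0 ∨ i.val % 3 = 1) with hm | hm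
      · refine ⟨.inl (i + 1), (adj_inl hn i _).mpr (Or.inl rfl), ?_⟩
        simp only [FFc]
        refine if_neg ?_
        rw [hsucc i (by omega)]
        omega
      · refine ⟨.inl (i - 1), (adj_inl hn i _).mpr (Or.inr (Or.inl rfl)), ?_⟩
        simp only [FFc]
        refine if_neg ?_
        rw [hpred i (by omega)]
        omega
    · exfalso
      simp only [FFc] at h0
      split at h0 <;> omega

end RDRDAux

theorem stmt16 (n : ℕ) (hn : 3 ≤ n) :
    gammaRdR (corona (SimpleGraph.cycleGraph n) (⊥ : SimpleGraph (Fin 1))) =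
      if n % 3 = 2 then (7 * n + 2) / 3 + 1 else (7 * n + 2) / 3 := by
  haveI : NeZero n := ⟨by omega⟩
  have heq : (if n % 3 = 2 then (7 * n + 2) / 3 + 1 else (7 * n + 2) / 3)
      = 7 * (n / 3) + 3 * (n % 3) := by
    by_cases h : n % 3 = 2
    · rw [if_pos h]; omega
    · rw [if_neg h]; omega
  have hmem : 7 * (n / 3) + 3 * (n % 3) ∈
      {w | ∃ f, IsRDRD (corona (SimpleGraph.cycleGraph n) (⊥ : SimpleGraph (Fin 1))) f ∧
        ∑ v, f v = w} :=
    ⟨RDRDAux.FFc n, RDRDAux.FF_isRDRD hn, RDRDAux.FF_sum hn⟩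
  have hub : gammaRdR (corona (SimpleGraph.cycleGraph n) (⊥ : SimpleGraph (Fin 1)))
      ≤ 7 * (n / 3) + 3 * (n % 3) := Nat.sInf_le hmem
  have hne : {w | ∃ f, IsRDRD (corona (SimpleGraph.cycleGraph n) (⊥ : SimpleGraph (Fin 1))) f ∧
      ∑ v, f v = w}.Nonempty := ⟨_, hmem⟩
  have hmem2 := Nat.sInf_mem hne
  obtain ⟨f0, hf0, hsum0⟩ := hmem2
  have hlb := RDRDAux.lower_bound hn f0 hf0
  rw [hsum0] at hlb
  rw [heq] at hlb ⊢
  exact le_antisymm hub hlb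
end

section
/- For n ≥ 1, γ_rdR(P_n ⊙ K₁) = ⌈7n/3⌉ if n ≡ 1 (mod 3), and ⌈7n/3⌉ + 1 if n ≡ 0 or 2 (mod 3). -/
open SimpleGraph Finset

/-! ### Auxiliary material for `stmt17` -/

section Stmt17Aux

variable {α β : Type*} {G' : SimpleGraph α} {H' : SimpleGraph β}

lemma corona_adj_ll {u v : α} : (corona G' H').Adj (.inl u) (.inl v) ↔ G'.Adj u v := Iff.rfl
lemma corona_adj_lr {u v : α} {b : β} : (corona G' H').Adj (.inl u) (.inr (v, b)) ↔ u = v := Iff.rfl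
lemma corona_adj_rl {u v : α} {b : β} : (corona G' H').Adj (.inr (v, b)) (.inl u) ↔ u = v := Iff.rfl
lemma corona_adj_rr {u v : α} {a b : β} :
    (corona G' H').Adj (.inr (u, a)) (.inr (v, b)) ↔ u = v ∧ H'.Adj a b := Iff.rfl

def spineW (n m : ℕ) : ℕ :=
  if m % 3 = 0 then 2 else if m = n - 1 ∧ n % 3 = 2 then 2 else 0

def pendW (n m : ℕ) : ℕ :=
  if m % 3 = 0 then 1 else if m = n - 1 ∧ n % 3 = 2 then 1
    else if m = n - 1 ∧ n % 3 = 0 then 3 else 2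

lemma sum_base (k : ℕ) :
    ∑ m ∈ range k, (if m % 3 = 0 then (3:ℕ) else 2) = 2*k + (k+2)/3 := by
  induction k with
  | zero => simp
  | succ k ih => rw [sum_range_succ, ih]; split_ifs <;> omega

lemma sum_W (n : ℕ) (hn : 1 ≤ n) :
    ∑ m ∈ range n, (spineW n m + pendW n m)
      = if n % 3 = 1 then (7*n+2)/3 else (7*n+2)/3 + 1 := by
  obtain ⟨k, rfl⟩ : ∃ k, n = k + 1 := ⟨n-1, by omega⟩
  rw [sum_range_succ]
  have h1 : ∀ m ∈ range k, spineW (k+1) m + pendW (k+1) m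
      = (if m % 3 = 0 then (3:ℕ) else 2) := by
    intro m hm
    simp only [mem_range] at hm
    unfold spineW pendW
    split_ifs <;> omega
  rw [sum_congr rfl h1, sum_base]
  have h2 : spineW (k+1) k + pendW (k+1) k = 3 := by
    unfold spineW pendW; split_ifs <;> omega
  rw [h2]
  split_ifs <;> omega

def fC (n : ℕ) : (Fin n ⊕ Fin n × Fin 1) → ℕ
  | .inl i => spineW n i.val
  | .inr (i, _) => pendW n i.val

lemma fC_isRDRD (n : ℕ) :
    IsRDRD (corona (pathGraph n) (⊥ : SimpleGraph (Fin 1))) (fC n) := by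
  refine ⟨?_, ?_, ?_, ?_⟩
  · rintro (i | ⟨i, j⟩) <;> simp only [fC, spineW, pendW] <;> split_ifs <;> omega
  · rintro (i | ⟨i, j⟩) hv
    · have hi := i.isLt
      simp only [fC, spineW] at hv
      split_ifs at hv with ha hb
      rcases (by omega : i.val % 3 = 1 ∨ i.val % 3 = 2) with h1 | h1
      · have hm1 : 1 ≤ i.val := by omega
        have hlt : i.val + 1 < n := by omega
        refine Or.inr ⟨.inl ⟨i.val - 1, by omega⟩, .inr (i, 0), by simp, ?_, ?_, ?_, ?_⟩
        · rw [corona_adj_ll, pathGraph_adj]; right; simp; omega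
        · exact corona_adj_lr.mpr rfl
        · simp only [fC, spineW]; split_ifs <;> omega
        · simp only [fC, pendW]; split_ifs <;> omega
      · by_cases hlt : i.val + 1 < n
        · refine Or.inr ⟨.inl ⟨i.val + 1, hlt⟩, .inr (i, 0), by simp, ?_, ?_, ?_, ?_⟩
          · rw [corona_adj_ll, pathGraph_adj]; left; simp
          · exact corona_adj_lr.mpr rfl
          · simp only [fC, spineW]; split_ifs <;> omega
          · simp only [fC, pendW]; split_ifs <;> omega
        · refine Or.inl ⟨.inr (i, 0), corona_adj_lr.mpr rfl, ?_⟩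
          simp only [fC, pendW]; split_ifs <;> omega
    · exfalso; simp only [fC, pendW] at hv; split_ifs at hv <;> omega
  · rintro (i | ⟨i, j⟩) hv
    · exfalso; simp only [fC, spineW] at hv; split_ifs at hv <;> omega
    · refine ⟨.inl i, corona_adj_rl.mpr rfl, ?_⟩
      simp only [fC, pendW] at hv
      simp only [fC, spineW]
      split_ifs at hv ⊢ <;> omega
  · rintro (i | ⟨i, j⟩) hv
    · have hi := i.isLt
      simp only [fC, spineW] at hv
      split_ifs at hv with ha hb
      rcases (by omega : i.val % 3 = 1 ∨ i.val % 3 = 2) with h1 | h1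
      · have hlt : i.val + 1 < n := by omega
        refine ⟨.inl ⟨i.val + 1, hlt⟩, ?_, ?_⟩
        · rw [corona_adj_ll, pathGraph_adj]; left; simp
        · simp only [fC, spineW]; split_ifs <;> omega
      · have hm2 : 2 ≤ i.val := by omega
        refine ⟨.inl ⟨i.val - 1, by omega⟩, ?_, ?_⟩
        · rw [corona_adj_ll, pathGraph_adj]; right; simp; omega
        · simp only [fC, spineW]; split_ifs <;> omega
    · exfalso; simp only [fC, pendW] at hv; split_ifs at hv <;> omega

lemma keyS : ∀ n : ℕ, ∀ c : ℕ → ℕ, (∀ i < n, 2 ≤ c i) →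
    (∀ i, i + 2 < n → ¬(c i = 2 ∧ c (i+1) = 2 ∧ c (i+2) = 2)) →
    (1 ≤ n → 3 ≤ c (n-1)) →
    7 * (n/3) + (5*(n%3)+1)/2 ≤ ∑ i ∈ range n, c i := by
  intro n
  induction n using Nat.strong_induction_on with
  | _ n ih =>
    intro c h2 h3 hend
    match n, h2, h3, hend, ih with
    | 0, h2, h3, hend, ih => simp
    | 1, h2, h3, hend, ih => simpa using hend (by omega)
    | 2, h2, h3, hend, ih =>
        have a := h2 0 (by omega); have b := hend (by omega)
        rw [sum_range_succ, sum_range_one]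
        simp at b ⊢; omega
    | (m+3), h2, h3, hend, ih =>
        have hsum : ∑ i ∈ range (m+3), c i
            = (∑ i ∈ range m, c (i+3)) + c 2 + c 1 + c 0 := by
          rw [Finset.sum_range_succ' c (m+2), Finset.sum_range_succ' _ (m+1),
            Finset.sum_range_succ' _ m]
        have hih : 7 * (m/3) + (5*(m%3)+1)/2 ≤ ∑ i ∈ range m, c (i+3) :=
          ih m (by omega) (fun i => c (i+3))
          (fun i hi => h2 (i+3) (by omega))
          (fun i hi => h3 (i+3) (by omega))
          (fun hm => by
            have h1 : 3 ≤ c (m + 3 - 1) := hend (by omega)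
            show 3 ≤ c (m - 1 + 3)
            have h : m - 1 + 3 = m + 3 - 1 := by omega
            rw [h]; exact h1)
        have hfirst : 7 ≤ c 0 + c 1 + c 2 := by
          have a := h2 0 (by omega); have b := h2 1 (by omega); have d := h2 2 (by omega)
          have e : ¬(c 0 = 2 ∧ c 1 = 2 ∧ c 2 = 2) := h3 0 (by omega)
          omega
        have harith : 7 * ((m+3)/3) + (5*((m+3)%3)+1)/2
            = 7 * (m/3) + (5*(m%3)+1)/2 + 7 := by omega
        omega

lemma pend_nbr {n : ℕ} {i : Fin n} {j : Fin 1} {x}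
    (h : (corona (pathGraph n) (⊥ : SimpleGraph (Fin 1))).Adj (.inr (i, j)) x) :
    x = .inl i := by
  match x with
  | .inl u => exact congrArg Sum.inl (corona_adj_rl.mp h)
  | .inr (v, b) => exact absurd (corona_adj_rr.mp h).2 (by simp)

lemma spine_nbr {n : ℕ} {i : Fin n} {x}
    (h : (corona (pathGraph n) (⊥ : SimpleGraph (Fin 1))).Adj (.inl i) x) :
    (∃ j : Fin n, x = .inl j ∧ (j.val + 1 = i.val ∨ i.val + 1 = j.val)) ∨ x = .inr (i, 0) := by
  match x with
  | .inl u => exact Or.inl ⟨u, rfl, (pathGraph_adj.mp (corona_adj_ll.mp h)).symm⟩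
  | .inr (v, b) =>
      right
      have h1 : i = v := corona_adj_lr.mp h
      have h2 : b = 0 := Subsingleton.elim b 0
      rw [h1, h2]

variable {n : ℕ} {f : (Fin n ⊕ Fin n × Fin 1) → ℕ}
  (hf : IsRDRD (corona (pathGraph n) (⊥ : SimpleGraph (Fin 1))) f)

include hf

lemma pend_pos (i : Fin n) : 1 ≤ f (.inr (i, 0)) := by
  by_contra h
  have h0 : f (.inr (i, 0)) = 0 := by omega
  obtain ⟨-, h20, -, hr⟩ := hf
  obtain ⟨u, hu, hu0⟩ := hr _ h0
  rw [pend_nbr hu] at hu0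
  rcases h20 _ h0 with ⟨u, hu, hu3⟩ | ⟨u, w, huw, hu, hw, -, -⟩
  · rw [pend_nbr hu, hu0] at hu3; omega
  · exact huw ((pend_nbr hu).trans (pend_nbr hw).symm)

lemma pend_one (i : Fin n) (h : f (.inr (i, 0)) = 1) : 2 ≤ f (.inl i) := by
  obtain ⟨u, hu, h2⟩ := hf.2.2.1 _ h
  rwa [pend_nbr hu] at h2

lemma light_struct (i : Fin n) (hs : f (.inl i) = 0) (hp : f (.inr (i, 0)) = 2) :
    (∃ j : Fin n, (j.val + 1 = i.val ∨ i.val + 1 = j.val) ∧ f (.inl j) = 0) ∧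
    (∃ j : Fin n, (j.val + 1 = i.val ∨ i.val + 1 = j.val) ∧ 2 ≤ f (.inl j)) := by
  constructor
  · obtain ⟨u, hu, hu0⟩ := hf.2.2.2 _ hs
    rcases spine_nbr hu with ⟨j, rfl, hj⟩ | rfl
    · exact ⟨j, hj, hu0⟩
    · omega
  · rcases hf.2.1 _ hs with ⟨u, hu, hu3⟩ | ⟨u, w, huw, hu, hw, hu2, hw2⟩
    · rcases spine_nbr hu with ⟨j, rfl, hj⟩ | rfl
      · exact ⟨j, hj, by omega⟩
      · omega
    · rcases spine_nbr hu with ⟨j, rfl, hj⟩ | rfl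
      · exact ⟨j, hj, by omega⟩
      · rcases spine_nbr hw with ⟨j, rfl, hj⟩ | rfl
        · exact ⟨j, hj, by omega⟩
        · exact absurd rfl huw

omit hf

lemma sum_vertex (g : Fin n ⊕ Fin n × Fin 1 → ℕ) :
    ∑ v, g v = ∑ i : Fin n, (g (.inl i) + g (.inr (i, 0))) := by
  rw [Fintype.sum_sum_type, Fintype.sum_prod_type, ← Finset.sum_add_distrib]
  exact sum_congr rfl fun i _ => by rw [Fin.sum_univ_one]

include hf

lemma lowerB (hn : 1 ≤ n) :
    (if n % 3 = 1 then (7*n+2)/3 else (7*n+2)/3+1) ≤ ∑ v, f v := by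
  obtain ⟨k, rfl⟩ : ∃ k, n = k + 1 := ⟨n-1, by omega⟩
  set c : ℕ → ℕ :=
    fun m => if h : m < k+1 then f (.inl ⟨m, h⟩) + f (.inr (⟨m, h⟩, 0)) else 0 with hc
  have hcm : ∀ (m) (h : m < k+1),
      c m = f (.inl ⟨m, h⟩) + f (.inr (⟨m, h⟩, 0)) := fun m h => dif_pos h
  have hsum : ∑ v, f v = ∑ m ∈ range (k+1), c m := by
    rw [sum_vertex f, ← Fin.sum_univ_eq_sum_range c (k+1)]
    exact sum_congr rfl fun i _ => (hcm i.val i.isLt).symm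
  have hc2 : ∀ m < k+1, 2 ≤ c m := by
    intro m hm
    rw [hcm m hm]
    have h1 := pend_pos hf ⟨m, hm⟩
    by_cases hp : f (.inr ((⟨m, hm⟩ : Fin (k+1)), 0)) = 1
    · have := pend_one hf ⟨m, hm⟩ hp; omega
    · omega
  have hlight : ∀ (m) (hm : m < k+1), c m = 2 →
      f (.inl (⟨m, hm⟩ : Fin (k+1))) = 0 ∧ f (.inr ((⟨m, hm⟩ : Fin (k+1)), 0)) = 2 := by
    intro m hm h2
    rw [hcm m hm] at h2
    have h1 := pend_pos hf ⟨m, hm⟩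
    by_cases hp : f (.inr ((⟨m, hm⟩ : Fin (k+1)), 0)) = 1
    · have := pend_one hf ⟨m, hm⟩ hp; omega
    · omega
  have htriple : ∀ m, m + 2 < k+1 → ¬(c m = 2 ∧ c (m+1) = 2 ∧ c (m+2) = 2) := by
    rintro m hm ⟨a, b, d⟩
    obtain ⟨ha0, -⟩ := hlight m (by omega) a
    obtain ⟨hb0, hb2⟩ := hlight (m+1) (by omega) b
    obtain ⟨hd0, -⟩ := hlight (m+2) (by omega) d
    obtain ⟨j, hj, hj2⟩ := (light_struct hf ⟨m+1, by omega⟩ hb0 hb2).2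
    have hj' : j.val + 1 = m + 1 ∨ m + 1 + 1 = j.val := hj
    have hjlt := j.isLt
    rcases (by omega : j.val = m ∨ j.val = m + 2) with h | h
    · have he : j = ⟨m, by omega⟩ := Fin.ext h
      rw [he] at hj2; omega
    · have he : j = ⟨m+2, by omega⟩ := Fin.ext h
      rw [he] at hj2; omega
  have hend : ∀ (m) (hm : m < k+1), (m = 0 ∨ m = k) → 3 ≤ c m := by
    intro m hm hm0
    by_contra hlt
    have h2 : c m = 2 := by have := hc2 m hm; omega
    obtain ⟨hs, hp⟩ := hlight m hm h2
    obtain ⟨⟨j, hj, hj0⟩, ⟨j', hj', hj'2⟩⟩ := light_struct hf ⟨m, hm⟩ hs hp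
    have hjv : j.val + 1 = m ∨ m + 1 = j.val := hj
    have hj'v : j'.val + 1 = m ∨ m + 1 = j'.val := hj'
    have hjlt := j.isLt; have hj'lt := j'.isLt
    have he : j = j' := Fin.ext (by omega)
    rw [he] at hj0; omega
  have hsplit : ∑ m ∈ range (k+1), c m = (∑ i ∈ range k, c (i+1)) + c 0 :=
    Finset.sum_range_succ' c k
  have hk : 7 * (k/3) + (5*(k%3)+1)/2 ≤ ∑ i ∈ range k, c (i+1) := by
    refine keyS k (fun i => c (i+1)) (fun i hi => hc2 (i+1) (by omega)) ?_ ?_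
    · intro i hi
      exact htriple (i+1) (by omega)
    · intro h1
      show 3 ≤ c (k-1+1)
      have heq : k - 1 + 1 = k := by omega
      rw [heq]
      exact hend k (by omega) (Or.inr rfl)
  have h0 := hend 0 (by omega) (Or.inl rfl)
  rw [hsum, hsplit]
  split_ifs <;> omega

end Stmt17Aux

theorem stmt17 (n : ℕ) (hn : 1 ≤ n) :
    gammaRdR (corona (SimpleGraph.pathGraph n) (⊥ : SimpleGraph (Fin 1))) =
      if n % 3 = 1 then (7 * n + 2) / 3 else (7 * n + 2) / 3 + 1 := by
  have hfsum : ∑ v, fC n v = (if n % 3 = 1 then (7*n+2)/3 else (7*n+2)/3+1) := by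
    rw [sum_vertex (fC n), ← sum_W n hn,
      ← Fin.sum_univ_eq_sum_range (fun m => spineW n m + pendW n m) n]
    rfl
  have hmem : (if n % 3 = 1 then (7*n+2)/3 else (7*n+2)/3+1) ∈
      {w | ∃ f, IsRDRD (corona (SimpleGraph.pathGraph n) (⊥ : SimpleGraph (Fin 1))) f ∧
        ∑ v, f v = w} := ⟨fC n, fC_isRDRD n, hfsum⟩
  refine le_antisymm (Nat.sInf_le hmem) (le_csInf ⟨_, hmem⟩ ?_)
  rintro w ⟨g, hg, rfl⟩
  exact lowerB hg hn
end
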